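/- Let (C, ∂) be a finite-dimensional chain complex over 𝔽_2 equipped with a chain involution τ (so τ² = id and τ∂ = ∂τ). Let K = 𝔽_2((θ)) be the field of formal Laurent series, and on C ⊗_{𝔽_2} K consider the differential D = ∂ + θ(1 + τ). Then dim_K H(C ⊗ K, D) ≤ dim_{𝔽_2} H(C, ∂). -/

import Mathlib

open scoped TensorProduct

set_option synthInstance.maxHeartbeats 1000000
set_option maxHeartbeats 2000000

/-- The field of formal Laurent series K = 𝔽₂((θ)) = 𝔽₂[[θ]][θ⁻¹], realized as
the fraction field of the formal power series ring over 𝔽₂. -/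
abbrev LaurentField : Type := FractionRing (PowerSeries (ZMod 2))

/-- The element θ of 𝔽₂((θ)). -/
noncomputable def thetaElt : LaurentField :=
  algebraMap (PowerSeries (ZMod 2)) LaurentField PowerSeries.X

section Aux

abbrev Rps : Type := PowerSeries (ZMod 2)

lemma algMap_inj : Function.Injective (algebraMap Rps LaurentField) :=
  IsFractionRing.injective _ _

lemma theta_ne_zero : thetaElt ≠ 0 := by
  intro h
  have : (PowerSeries.X : Rps) = 0 := algMap_inj (by simpa [thetaElt] using h)
  exact PowerSeries.X_ne_zero this

variable {C : Type*} [AddCommGroup C] [Module (ZMod 2) C]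

/-- Lift of an 𝔽₂-linear functional to `K ⊗ C`, as an 𝔽₂-linear map. -/
noncomputable def Gfun (f : C →ₗ[ZMod 2] ZMod 2) :
    LaurentField ⊗[ZMod 2] C →ₗ[ZMod 2] LaurentField :=
  TensorProduct.lift (LinearMap.mk₂ (ZMod 2) (fun k c => f c • k)
    (fun k k' c => smul_add _ _ _)
    (fun z k c => smul_comm _ _ _)
    (fun k c c' => by rw [map_add, add_smul])
    (fun z k c => by rw [map_smul, smul_assoc]))

@[simp] lemma Gfun_tmul (f : C →ₗ[ZMod 2] ZMod 2) (k : LaurentField) (c : C) :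
    Gfun f (k ⊗ₜ[ZMod 2] c) = f c • k := rfl

/-- Key lemma: if `v` is linearly independent over 𝔽₂ then the family
`1 ⊗ vᵢ + θ • (1 ⊗ wᵢ)` is linearly independent over `K = 𝔽₂((θ))`. -/
lemma indep_key {r : ℕ} (v w : Fin r → C) (hv : LinearIndependent (ZMod 2) v) :
    LinearIndependent LaurentField
      (fun i => (1 : LaurentField) ⊗ₜ[ZMod 2] v i
        + thetaElt • ((1 : LaurentField) ⊗ₜ[ZMod 2] w i)) := by
  classical
  set x : Fin r → LaurentField ⊗[ZMod 2] C := fun i =>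
    (1 : LaurentField) ⊗ₜ[ZMod 2] v i
      + thetaElt • ((1 : LaurentField) ⊗ₜ[ZMod 2] w i) with hxdef
  rw [Fintype.linearIndependent_iff]
  intro c hc
  by_contra hne
  push_neg at hne
  obtain ⟨i₀, hi₀⟩ := hne
  -- clear denominators
  obtain ⟨b, hb⟩ := IsLocalization.exist_integer_multiples_of_finite
      (nonZeroDivisors Rps) c
  have hb' : ∀ i, ∃ a : Rps, algebraMap Rps LaurentField a = (b : Rps) • c i :=
    fun i => hb i
  choose g hg using hb'
  have hrel : ∑ i, algebraMap Rps LaurentField (g i) • x i = 0 := by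
    simp_rw [hg, Algebra.smul_def, mul_smul, ← Finset.smul_sum, hc, smul_zero]
  have hbne : algebraMap Rps LaurentField (b : Rps) ≠ 0 := by
    intro h
    exact nonZeroDivisors.coe_ne_zero b (algMap_inj (by simpa using h))
  have hg0 : g i₀ ≠ 0 := by
    intro h
    have h2 := hg i₀
    rw [h, map_zero, Algebra.smul_def] at h2
    exact hi₀ ((mul_eq_zero.mp h2.symm).resolve_left hbne)
  -- strip powers of θ
  have hP : ∃ k, ∃ i, PowerSeries.coeff k (g i) ≠ 0 := by
    by_contra h
    push_neg at h
    exact hg0 (PowerSeries.ext fun k => by simpa using h k i₀)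
  set m := Nat.find hP with hm
  obtain ⟨i₁, hi₁⟩ := Nat.find_spec hP
  rw [← hm] at hi₁
  have hdvd : ∀ i, (PowerSeries.X : Rps) ^ m ∣ g i := fun i =>
    PowerSeries.X_pow_dvd_iff.2 fun j hj => by
      have := Nat.find_min hP hj
      push_neg at this
      exact this i
  choose h hh using hdvd
  have hcc : PowerSeries.constantCoeff (h i₁) ≠ 0 := by
    intro h0
    apply hi₁
    rw [hh i₁]
    have h2 := PowerSeries.coeff_X_pow_mul (h i₁) m 0
    rw [zero_add] at h2
    rw [h2, PowerSeries.coeff_zero_eq_constantCoeff]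
    exact h0
  have hrel2 : ∑ i, algebraMap Rps LaurentField (h i) • x i = 0 := by
    have hθ : thetaElt ^ m • ∑ i, algebraMap Rps LaurentField (h i) • x i = 0 := by
      rw [Finset.smul_sum, ← hrel]
      refine Finset.sum_congr rfl fun i _ => ?_
      rw [hh i, map_mul, map_pow, mul_smul]
      rfl
    rcases smul_eq_zero.mp hθ with h' | h'
    · exact absurd h' (pow_ne_zero _ theta_ne_zero)
    · exact h'
  -- the dual functional
  have hsp : ∀ i, v i ∈ Submodule.span (ZMod 2) (Set.range v) :=
    fun i => Submodule.subset_span (Set.mem_range_self i)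
  obtain ⟨q, hq⟩ := Submodule.exists_isCompl (Submodule.span (ZMod 2) (Set.range v))
  set π := (Submodule.span (ZMod 2) (Set.range v)).linearProjOfIsCompl q hq with hπ
  set bs := Module.Basis.span hv with hbs
  set f : C →ₗ[ZMod 2] ZMod 2 := (bs.coord i₁) ∘ₗ π with hfdef
  have hf : ∀ i, f (v i) = if i = i₁ then 1 else 0 := by
    intro i
    have h1 : π (v i) = bs i := by
      have h2 : π ((⟨v i, hsp i⟩ : Submodule.span (ZMod 2) (Set.range v)) : C)
          = ⟨v i, hsp i⟩ := Submodule.linearProjOfIsCompl_apply_left hq _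
      have h3 : (⟨v i, hsp i⟩ : Submodule.span (ZMod 2) (Set.range v)) = bs i :=
        (Module.Basis.span_apply hv i).symm
      rw [← h3]
      exact h2
    simp only [hfdef, LinearMap.comp_apply, h1, Module.Basis.coord_apply, Module.Basis.repr_self]
    simp [Finsupp.single_apply]
  -- apply the functional
  set G := Gfun f with hG
  have h0 : ∑ i, G (algebraMap Rps LaurentField (h i) • x i) = 0 := by
    rw [← map_sum, hrel2, map_zero]
  have hterm : ∀ i, G (algebraMap Rps LaurentField (h i) • x i)
      = f (v i) • algebraMap Rps LaurentField (h i)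
        + algebraMap Rps LaurentField ((f (w i)) • h i) * thetaElt := by
    intro i
    have hx : algebraMap Rps LaurentField (h i) • x i
        = (algebraMap Rps LaurentField (h i)) ⊗ₜ[ZMod 2] v i
          + (algebraMap Rps LaurentField (h i) * thetaElt) ⊗ₜ[ZMod 2] w i := by
      simp only [hxdef, smul_add, smul_smul]
      rw [TensorProduct.smul_tmul', TensorProduct.smul_tmul']
      simp [smul_eq_mul]
    rw [hx, map_add, Gfun_tmul, Gfun_tmul]
    congr 1
    rw [← smul_mul_assoc]
    congr 1
    exact (map_smul ((IsScalarTower.toAlgHom (ZMod 2) Rps LaurentField).toLinearMap)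
      (f (w i)) (h i)).symm
  rw [Finset.sum_congr rfl (fun i _ => hterm i)] at h0
  rw [Finset.sum_add_distrib] at h0
  have hs1 : ∑ i, f (v i) • algebraMap Rps LaurentField (h i)
      = algebraMap Rps LaurentField (h i₁) := by
    rw [Finset.sum_congr rfl (fun i _ => by rw [hf i, ite_smul, one_smul, zero_smul])]
    simp
  have hs2 : ∑ i, algebraMap Rps LaurentField ((f (w i)) • h i) * thetaElt
      = algebraMap Rps LaurentField (∑ i, (f (w i)) • h i) * thetaElt := by
    rw [← Finset.sum_mul, ← map_sum]
  rw [hs1, hs2] at h0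
  -- pull back to power series and take constant coefficient
  have h4 : h i₁ + (∑ i, (f (w i)) • h i) * PowerSeries.X = 0 := by
    apply algMap_inj
    rw [map_add, map_mul, map_zero]
    exact h0
  have h5 := congrArg (PowerSeries.constantCoeff (R := ZMod 2)) h4
  rw [map_add, map_mul, PowerSeries.constantCoeff_X, mul_zero, add_zero, map_zero] at h5
  exact hcc h5

end Aux

/-- Rank inequality for the localization spectral sequence: for a
finite-dimensional chain complex (C, ∂) over 𝔽₂ with chain involution τ,
the homology of (C ⊗ 𝔽₂((θ)), D = ∂ + θ(1+τ)) over K = 𝔽₂((θ)) has dimension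
at most dim_{𝔽₂} H(C, ∂).  (Since D² = 0 and ∂² = 0, the image of each
differential is contained in its kernel, and the dimension of the homology
ker/im is dim ker − dim im.) -/
theorem stmt_8 (C : Type*) [AddCommGroup C] [Module (ZMod 2) C]
    [FiniteDimensional (ZMod 2) C]
    (del tau : C →ₗ[ZMod 2] C)
    (hdel : del ∘ₗ del = 0)
    (htau : tau ∘ₗ tau = LinearMap.id)
    (hcomm : del ∘ₗ tau = tau ∘ₗ del)
    (D : LaurentField ⊗[ZMod 2] C →ₗ[LaurentField] LaurentField ⊗[ZMod 2] C)
    (hD : D = LinearMap.baseChange LaurentField del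
        + thetaElt • LinearMap.baseChange LaurentField (LinearMap.id + tau)) :
    (Module.finrank LaurentField (LinearMap.ker D) : ℤ)
        - (Module.finrank LaurentField (LinearMap.range D) : ℤ)
      ≤ (Module.finrank (ZMod 2) (LinearMap.ker del) : ℤ)
        - (Module.finrank (ZMod 2) (LinearMap.range del) : ℤ) := by
  classical
  have hrn1 := LinearMap.finrank_range_add_finrank_ker D
  have hrn2 := LinearMap.finrank_range_add_finrank_ker del
  have hfr : Module.finrank LaurentField (LaurentField ⊗[ZMod 2] C)
      = Module.finrank (ZMod 2) C := Module.finrank_baseChange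
  have key : Module.finrank (ZMod 2) (LinearMap.range del) ≤
      Module.finrank LaurentField (LinearMap.range D) := by
    set r := Module.finrank (ZMod 2) (LinearMap.range del) with hr
    let bs : Module.Basis (Fin r) (ZMod 2) (LinearMap.range del) :=
      Module.finBasis (ZMod 2) (LinearMap.range del)
    have hmem : ∀ i, (bs i : C) ∈ LinearMap.range del := fun i => (bs i).2
    choose p hp using hmem
    have hu : LinearIndependent (ZMod 2) (fun i => (bs i : C)) :=
      bs.linearIndependent.map' (LinearMap.range del).subtype
        (Submodule.ker_subtype _)
    have hxi : ∀ i, D ((1 : LaurentField) ⊗ₜ[ZMod 2] p i)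
        = (1 : LaurentField) ⊗ₜ[ZMod 2] (bs i : C)
          + thetaElt • ((1 : LaurentField) ⊗ₜ[ZMod 2] (p i + tau (p i))) := by
      intro i
      rw [hD]
      simp only [LinearMap.add_apply, LinearMap.smul_apply, LinearMap.baseChange_tmul,
        LinearMap.id_coe, id_eq, hp i]
    have hind := indep_key (fun i => (bs i : C)) (fun i => p i + tau (p i)) hu
    have hle : Submodule.span LaurentField (Set.range fun i =>
        (1 : LaurentField) ⊗ₜ[ZMod 2] (bs i : C)
          + thetaElt • ((1 : LaurentField) ⊗ₜ[ZMod 2] (p i + tau (p i))))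
        ≤ LinearMap.range D := by
      rw [Submodule.span_le]
      rintro _ ⟨i, rfl⟩
      exact ⟨(1 : LaurentField) ⊗ₜ[ZMod 2] p i, (hxi i)⟩
    have hcard := finrank_span_eq_card hind
    rw [Fintype.card_fin] at hcard
    calc r = _ := hcard.symm
      _ ≤ _ := Submodule.finrank_mono hle
  omega
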